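/- Let A : S → ℝ^{d×d} be a bounded measurable matrix-valued function with ‖A(s)‖ ≤ G_A, let μ be a probability measure, D(s) = sqrt(A(s)ᵀA(s)), D̄ = ∫ D dμ, Ā = ∫ A dμ, and suppose ‖D̄ Ā⁻¹‖ ≤ ν. Then for any vector v ∈ ℝ^d with ‖v‖ ≤ 2G_x, ∫ ‖A(s)v‖² dμ(s) ≤ 2·G_A·G_x·ν·‖Ā v‖. -/

import Mathlib

open MeasureTheory
open scoped RealInnerProductSpace

set_option maxHeartbeats 1000000
set_option synthInstance.maxHeartbeats 200000

/-- Cauchy–Schwarz for a positive semidefinite self-adjoint operator. -/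
lemma psd_cauchy_schwarz {d : ℕ}
    (T : EuclideanSpace ℝ (Fin d) →L[ℝ] EuclideanSpace ℝ (Fin d))
    (hsa : IsSelfAdjoint T) (hpos : ∀ x, 0 ≤ ⟪T x, x⟫)
    (x y : EuclideanSpace ℝ (Fin d)) :
    ⟪T x, y⟫ ^ 2 ≤ ⟪T x, x⟫ * ⟪T y, y⟫ := by
  have hsymm : ∀ a b, ⟪T a, b⟫ = ⟪T b, a⟫ := by
    intro a b
    have h := ContinuousLinearMap.adjoint_inner_left T b a
    rw [hsa.adjoint_eq] at h
    rw [h]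
    exact real_inner_comm _ _
  have hq : ∀ t : ℝ, 0 ≤ ⟪T y, y⟫ * (t * t) + (2 * ⟪T x, y⟫) * t + ⟪T x, x⟫ := by
    intro t
    have h0 := hpos (x + t • y)
    have hexp : ⟪T (x + t • y), x + t • y⟫ =
        ⟪T y, y⟫ * (t * t) + (2 * ⟪T x, y⟫) * t + ⟪T x, x⟫ := by
      simp only [map_add, ContinuousLinearMap.map_smul, inner_add_left, inner_add_right,
        real_inner_smul_left, real_inner_smul_right]
      rw [hsymm y x]
      ring
    linarith [hexp ▸ h0]
  have hd := discrim_le_zero hq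
  rw [discrim] at hd
  nlinarith [hd]

theorem noise_alignment_variance_bound
    {S : Type*} [MeasurableSpace S] (μ : Measure S) [IsProbabilityMeasure μ]
    {d : ℕ}
    (A D : S → EuclideanSpace ℝ (Fin d) →L[ℝ] EuclideanSpace ℝ (Fin d))
    (hAint : Integrable A μ) (hDint : Integrable D μ)
    (GA Gx ν : ℝ) (hGA : ∀ s, ‖A s‖ ≤ GA)
    -- D(s) is the positive semidefinite square root of A(s)ᵀA(s)
    (hDsa : ∀ s, IsSelfAdjoint (D s))
    (hDpos : ∀ s x, 0 ≤ ⟪D s x, x⟫)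
    (hDsq : ∀ s, (D s).comp (D s) =
      (ContinuousLinearMap.adjoint (A s)).comp (A s))
    -- Ā is invertible with inverse B and ‖D̄ Ā⁻¹‖ ≤ ν
    (B : EuclideanSpace ℝ (Fin d) →L[ℝ] EuclideanSpace ℝ (Fin d))
    (hAB : (∫ s, A s ∂μ).comp B = ContinuousLinearMap.id ℝ _)
    (hBA : B.comp (∫ s, A s ∂μ) = ContinuousLinearMap.id ℝ _)
    (hν : ‖(∫ s, D s ∂μ).comp B‖ ≤ ν)
    (v : EuclideanSpace ℝ (Fin d)) (hv : ‖v‖ ≤ 2 * Gx) (hGx : 0 ≤ Gx)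
    (hint : Integrable (fun s => ‖A s v‖ ^ 2) μ) :
    (∫ s, ‖A s v‖ ^ 2 ∂μ) ≤ 2 * GA * Gx * ν * ‖(∫ s, A s ∂μ) v‖ := by
  -- S is nonempty since μ is a probability measure
  have hS : Nonempty S := by
    rcases isEmpty_or_nonempty S with h | h
    · exfalso
      have h1 : μ Set.univ = 1 := measure_univ
      rw [Set.univ_eq_empty_iff.mpr h] at h1
      simp at h1
    · exact h
  obtain ⟨s₀⟩ := hS
  have hGA0 : 0 ≤ GA := le_trans (norm_nonneg _) (hGA s₀)
  have hν0 : 0 ≤ ν := le_trans (norm_nonneg _) hν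
  -- ‖D s‖ ≤ GA
  have hDnorm : ∀ s, ‖D s‖ ≤ GA := by
    intro s
    have h1 : ‖D s‖ * ‖D s‖ = ‖A s‖ * ‖A s‖ := by
      have := ContinuousLinearMap.norm_adjoint_comp_self (D s)
      rw [(hDsa s).adjoint_eq, hDsq s] at this
      rw [← this, ContinuousLinearMap.norm_adjoint_comp_self]
    nlinarith [norm_nonneg (D s), norm_nonneg (A s), hGA s]
  -- ‖A s v‖² = ⟪D s v, v⟫ bound: ‖A s v‖² ≤ GA * ⟪D s v, v⟫
  have hkey : ∀ s, ‖A s v‖ ^ 2 ≤ GA * ⟪D s v, v⟫ := by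
    intro s
    have hAv : ‖A s v‖ ^ 2 = ‖D s v‖ ^ 2 := by
      have h1 : ⟪A s v, A s v⟫ = ⟪D s v, D s v⟫ := by
        have h2 : (D s) ((D s) v) = (ContinuousLinearMap.adjoint (A s)) ((A s) v) := by
          rw [← ContinuousLinearMap.comp_apply, ← ContinuousLinearMap.comp_apply, hDsq s]
        have h3 : ⟪(ContinuousLinearMap.adjoint (A s)) (A s v), v⟫ = ⟪A s v, A s v⟫ :=
          ContinuousLinearMap.adjoint_inner_left (A s) v (A s v)
        have h4 : ⟪D s (D s v), v⟫ = ⟪D s v, D s v⟫ := by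
          have h := ContinuousLinearMap.adjoint_inner_left (D s) v ((D s) v)
          rwa [(hDsa s).adjoint_eq] at h
        rw [← h3, ← h2, h4]
      
      rw [← real_inner_self_eq_norm_sq, ← real_inner_self_eq_norm_sq, h1]
    rw [hAv]
    -- Cauchy–Schwarz: ⟪D v, D v⟫² ≤ ⟪D v, v⟫ ⟪D (D v), D v⟫
    have hcs := psd_cauchy_schwarz (D s) (hDsa s) (hDpos s) v (D s v)
    have hDD : ⟪D s (D s v), D s v⟫ ≤ ‖D s‖ * ‖D s v‖ ^ 2 := by
      calc ⟪D s (D s v), D s v⟫ ≤ ‖D s (D s v)‖ * ‖D s v‖ := real_inner_le_norm _ _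
        _ ≤ (‖D s‖ * ‖D s v‖) * ‖D s v‖ := by
            apply mul_le_mul_of_nonneg_right ((D s).le_opNorm _) (norm_nonneg _)
        _ = ‖D s‖ * ‖D s v‖ ^ 2 := by ring
    have hDvnn : 0 ≤ ⟪D s v, v⟫ := hDpos s v
    have hDv2 : ⟪D s v, D s v⟫ = ‖D s v‖ ^ 2 := real_inner_self_eq_norm_sq _
    rcases eq_or_lt_of_le (sq_nonneg ‖D s v‖) with h0 | h0
    · rw [← h0]; positivity
    · -- ‖D s v‖⁴ ≤ ⟪Dv,v⟫ * ‖D s‖ * ‖D s v‖²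
      have h5 : (‖D s v‖ ^ 2) ^ 2 ≤ ⟪D s v, v⟫ * (‖D s‖ * ‖D s v‖ ^ 2) := by
        have h5' := le_trans hcs (mul_le_mul_of_nonneg_left hDD hDvnn)
        rwa [hDv2] at h5' 
      have h6 : ‖D s v‖ ^ 2 ≤ ⟪D s v, v⟫ * ‖D s‖ := by
        have := mul_le_mul_of_nonneg_right h5 (le_of_lt (inv_pos.mpr h0))
        rw [pow_two (‖D s v‖ ^ 2)] at this
        calc ‖D s v‖ ^ 2 = ‖D s v‖ ^ 2 * ‖D s v‖ ^ 2 * (‖D s v‖ ^ 2)⁻¹ := by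
              field_simp
          _ ≤ ⟪D s v, v⟫ * (‖D s‖ * ‖D s v‖ ^ 2) * (‖D s v‖ ^ 2)⁻¹ := this
          _ = ⟪D s v, v⟫ * ‖D s‖ := by rw [mul_assoc, mul_inv_cancel_right₀ h0.ne']
      calc ‖D s v‖ ^ 2 ≤ ⟪D s v, v⟫ * ‖D s‖ := h6
        _ ≤ ⟪D s v, v⟫ * GA := mul_le_mul_of_nonneg_left (hDnorm s) hDvnn
        _ = GA * ⟪D s v, v⟫ := mul_comm _ _
  -- integrability of the inner product
  have hDvint : Integrable (fun s => D s v) μ := hDint.apply_continuousLinearMap v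
  have hinner_int : Integrable (fun s => ⟪D s v, v⟫) μ := hDvint.inner_const v
  -- ∫ ⟪D s v, v⟫ = ⟪D̄ v, v⟫
  have hDbar : ∫ s, ⟪D s v, v⟫ ∂μ = ⟪(∫ s, D s ∂μ) v, v⟫ := by
    calc ∫ s, ⟪D s v, v⟫ ∂μ = ∫ s, ⟪v, D s v⟫ ∂μ := by
          congr 1; funext s; exact real_inner_comm _ _
      _ = ⟪v, ∫ s, D s v ∂μ⟫ := integral_inner hDvint v
      _ = ⟪(∫ s, D s ∂μ) v, v⟫ := by
          rw [ContinuousLinearMap.integral_apply hDint]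
          exact real_inner_comm _ _
  -- put it together
  have hDbarv : ‖(∫ s, D s ∂μ) v‖ ≤ ν * ‖(∫ s, A s ∂μ) v‖ := by
    have hBv : B ((∫ s, A s ∂μ) v) = v := by
      have h2 := ContinuousLinearMap.ext_iff.mp hBA v
      rwa [ContinuousLinearMap.comp_apply, ContinuousLinearMap.id_apply] at h2
    calc ‖(∫ s, D s ∂μ) v‖ = ‖((∫ s, D s ∂μ).comp B) ((∫ s, A s ∂μ) v)‖ := by
          rw [ContinuousLinearMap.comp_apply, hBv]
      _ ≤ ‖(∫ s, D s ∂μ).comp B‖ * ‖(∫ s, A s ∂μ) v‖ := ContinuousLinearMap.le_opNorm _ _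
      _ ≤ ν * ‖(∫ s, A s ∂μ) v‖ :=
          mul_le_mul_of_nonneg_right hν (norm_nonneg _)
  calc (∫ s, ‖A s v‖ ^ 2 ∂μ) ≤ ∫ s, GA * ⟪D s v, v⟫ ∂μ :=
        integral_mono hint (hinner_int.const_mul GA) hkey
    _ = GA * ⟪(∫ s, D s ∂μ) v, v⟫ := by rw [integral_const_mul, hDbar]
    _ ≤ GA * (‖(∫ s, D s ∂μ) v‖ * ‖v‖) :=
        mul_le_mul_of_nonneg_left (real_inner_le_norm _ _) hGA0
    _ ≤ GA * ((ν * ‖(∫ s, A s ∂μ) v‖) * (2 * Gx)) := by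
        apply mul_le_mul_of_nonneg_left _ hGA0
        exact mul_le_mul hDbarv hv (norm_nonneg _) (by positivity)
    _ = 2 * GA * Gx * ν * ‖(∫ s, A s ∂μ) v‖ := by ring
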